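/- Let R and S be local integral domains and f : R → S an injective ring homomorphism. If M is a finitely generated R-module with projective dimension at most 1 over R, then the S-module M ⊗_R S has projective dimension at most 1 over S. -/

import Mathlib

/-!
STATEMENT 0: If `R → S` is an injective homomorphism of Noetherian local domains and `M` is a
finitely generated `R`-module of projective dimension at most 1, then `M ⊗[R] S` has projective
dimension at most 1 over `S`.

Since `R` (resp. `S`) is Noetherian local and the modules are finitely generated, having
projective dimension at most `1` is equivalent to admitting a resolution
`0 → R^n → R^m → M → 0` by finite free modules; we use this as the definition.
-/

open scoped TensorProduct

universe u

/-- A module has projective dimension at most one iff it admits a length-one resolution by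
finite free modules (over a Noetherian local ring, for finitely generated modules). -/
def HasProjDimLEOne (R : Type u) (M : Type u) [CommRing R] [AddCommGroup M] [Module R M] :
    Prop :=
  ∃ (n m : ℕ) (g : (Fin n → R) →ₗ[R] (Fin m → R)) (h : (Fin m → R) →ₗ[R] M),
    Function.Injective g ∧ Function.Surjective h ∧ LinearMap.range g = LinearMap.ker h


-- injectivity transfer between a linear map and its matrix
lemma injective_iff_matrix {R : Type u} [CommRing R] {V W : Type*} [AddCommGroup V] [Module R V]
    [AddCommGroup W] [Module R W] {ι κ : Type*} [Fintype ι] [Fintype κ] [DecidableEq ι]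
    (b1 : Module.Basis ι R V) (b2 : Module.Basis κ R W) (f : V →ₗ[R] W) :
    Function.Injective f ↔ Function.Injective (LinearMap.toMatrix b1 b2 f).mulVecLin := by
  have key : ∀ x : V, (LinearMap.toMatrix b1 b2 f).mulVecLin (b1.equivFun x) = b2.equivFun (f x) := by
    intro x
    simpa [Matrix.mulVecLin_apply, Module.Basis.equivFun_apply] using
      LinearMap.toMatrix_mulVec_repr b1 b2 f x
  constructor
  · intro hf v w hvw
    have h1 := key (b1.equivFun.symm v)
    have h2 := key (b1.equivFun.symm w)
    rw [b1.equivFun.apply_symm_apply] at h1 h2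
    have : b2.equivFun (f (b1.equivFun.symm v)) = b2.equivFun (f (b1.equivFun.symm w)) := by
      rw [← h1, ← h2, hvw]
    have := hf (b2.equivFun.injective this)
    exact b1.equivFun.symm.injective this
  · intro hm x y hxy
    have : (LinearMap.toMatrix b1 b2 f).mulVecLin (b1.equivFun x)
        = (LinearMap.toMatrix b1 b2 f).mulVecLin (b1.equivFun y) := by
      rw [key, key, hxy]
    exact b1.equivFun.injective (hm this)


lemma matrix_map_injective {R S : Type u} [CommRing R] [CommRing S] [IsDomain R] [IsDomain S]
    [Algebra R S] (hinj : Function.Injective (algebraMap R S))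
    {m n : ℕ} (A : Matrix (Fin m) (Fin n) R) (hA : Function.Injective A.mulVecLin) :
    Function.Injective (A.map (algebraMap R S)).mulVecLin := by
  classical
  set K := FractionRing R
  set L := FractionRing S
  have hSL : Function.Injective (algebraMap S L) := IsFractionRing.injective S L
  have hRK : Function.Injective (algebraMap R K) := IsFractionRing.injective R K
  set gRL : R →+* L := (algebraMap S L).comp (algebraMap R S) with hgRL
  have hgRLinj : Function.Injective gRL := hSL.comp hinj
  set φ : K →+* L := IsFractionRing.lift (g := gRL) hgRLinj with hφ
  -- step 1: injectivity over K
  have hK : Function.Injective (A.map (algebraMap R K)).mulVecLin := by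
    rw [injective_iff_map_eq_zero]
    intro x hx
    obtain ⟨b, hb⟩ := IsLocalization.exist_integer_multiples_of_finite
      (nonZeroDivisors R) x
    choose y hy using hb
    have hAy : A.mulVecLin y = 0 := by
      funext j
      apply hRK
      show algebraMap R K (A.mulVecLin y j) = algebraMap R K 0
      rw [map_zero]
      have : algebraMap R K ((A.mulVecLin y) j)
          = ((A.map (algebraMap R K)).mulVecLin (fun i => algebraMap R K (y i))) j := by
        simpa [Matrix.mulVecLin_apply, Function.comp_def] using
          RingHom.map_mulVec (algebraMap R K) A y j
      rw [this]
      have hyx : (fun i => algebraMap R K (y i)) = (algebraMap R K (b : R)) • x := by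
        funext i
        rw [hy i, Algebra.smul_def]
        rfl
      rw [hyx, map_smul, hx]
      simp
    have hy0 : y = 0 := hA (by simpa using hAy)
    have hb0 : (algebraMap R K (b : R)) ≠ 0 := by
      simpa using hRK.ne_iff.mpr (nonZeroDivisors.coe_ne_zero b)
    funext i
    have := hy i
    rw [hy0] at this
    simp only [Pi.zero_apply, map_zero] at this
    have : algebraMap R K (b : R) * x i = 0 := by
      rw [← Algebra.smul_def]
      exact this.symm
    rcases mul_eq_zero.mp this with h | h
    · exact absurd h hb0
    · simpa using h
  -- step 2: left inverse over K
  have hKker : LinearMap.ker (Matrix.toLin' (A.map (algebraMap R K))) = ⊥ := by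
    rw [LinearMap.ker_eq_bot]
    exact hK
  obtain ⟨l, hl⟩ := (Matrix.toLin' (A.map (algebraMap R K))).exists_leftInverse_of_injective hKker
  set B := LinearMap.toMatrix' l with hB
  have hBA : B * (A.map (algebraMap R K)) = 1 := by
    have := congrArg LinearMap.toMatrix' hl
    rwa [LinearMap.toMatrix'_comp, LinearMap.toMatrix'_toLin', LinearMap.toMatrix'_id] at this
  -- step 3: left inverse over L
  have hmapmap : (A.map (algebraMap R K)).map φ = A.map gRL := by
    rw [Matrix.map_map]
    have : (⇑φ ∘ ⇑(algebraMap R K)) = ⇑gRL :=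
      funext fun r => IsFractionRing.lift_algebraMap hgRLinj r
    rw [this]
  have hBL : (B.map φ) * (A.map gRL) = 1 := by
    rw [← hmapmap, ← Matrix.map_mul, hBA, Matrix.map_one _ (map_zero φ) (map_one φ)]
  -- step 4: conclude
  rw [injective_iff_map_eq_zero]
  intro x hx
  have hxL : (A.map gRL).mulVec (fun i => algebraMap S L (x i)) = 0 := by
    funext j
    have h1 : algebraMap S L (((A.map (algebraMap R S)).mulVec x) j)
        = ((A.map gRL).mulVec (fun i => algebraMap S L (x i))) j := by
      have := RingHom.map_mulVec (algebraMap S L) (A.map (algebraMap R S)) x j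
      rw [Matrix.map_map] at this
      exact this
    rw [← h1]
    have : (A.map (algebraMap R S)).mulVec x = 0 := by simpa [Matrix.mulVecLin_apply] using hx
    rw [this]
    simp
  have : (fun i => algebraMap S L (x i)) = (0 : Fin n → L) := by
    calc (fun i => algebraMap S L (x i))
        = Matrix.mulVec 1 (fun i => algebraMap S L (x i)) := by rw [Matrix.one_mulVec]
      _ = ((B.map φ) * (A.map gRL)).mulVec (fun i => algebraMap S L (x i)) := by rw [hBL]
      _ = (B.map φ).mulVec ((A.map gRL).mulVec (fun i => algebraMap S L (x i))) := by
          rw [Matrix.mulVec_mulVec]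
      _ = 0 := by rw [hxL]; simp
  funext i
  have := congrFun this i
  simp only [Pi.zero_apply] at this ⊢
  exact hSL (by simpa using this)

theorem stmt_0 (R S : Type u) [CommRing R] [CommRing S] [IsDomain R] [IsDomain S]
    [IsNoetherianRing R] [IsNoetherianRing S] [IsLocalRing R] [IsLocalRing S]
    [Algebra R S] (hinj : Function.Injective (algebraMap R S))
    (M : Type u) [AddCommGroup M] [Module R M] [Module.Finite R M]
    (hpd : HasProjDimLEOne R M) :
    HasProjDimLEOne S (S ⊗[R] M) := by
  classical
  obtain ⟨n, m, g, h, hg, hh, hgh⟩ := hpd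
  set bn : Module.Basis (Fin n) S (S ⊗[R] (Fin n → R)) :=
    Algebra.TensorProduct.basis S (Pi.basisFun R (Fin n)) with hbn
  set bm : Module.Basis (Fin m) S (S ⊗[R] (Fin m → R)) :=
    Algebra.TensorProduct.basis S (Pi.basisFun R (Fin m)) with hbm
  -- injectivity of the base-changed map
  have hA : Function.Injective
      (LinearMap.toMatrix (Pi.basisFun R (Fin n)) (Pi.basisFun R (Fin m)) g).mulVecLin :=
    (injective_iff_matrix _ _ g).mp hg
  have hAS := matrix_map_injective hinj _ hA
  have hbg : Function.Injective (g.baseChange S) := by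
    rw [injective_iff_matrix bn bm, hbn, hbm, LinearMap.toMatrix_baseChange]
    exact hAS
  have hbh : Function.Surjective (h.baseChange S) := by
    have : (h.baseChange S : S ⊗[R] (Fin m → R) → S ⊗[R] M) = h.lTensor S :=
      h.baseChange_eq_ltensor
    rw [this]
    exact LinearMap.lTensor_surjective S hh
  have hexR : Function.Exact g h := LinearMap.exact_iff.mpr hgh.symm
  have hexact : Function.Exact (g.baseChange S) (h.baseChange S) := by
    have := lTensor_exact S hexR hh
    rwa [← g.baseChange_eq_ltensor, ← h.baseChange_eq_ltensor] at this
  have hker : LinearMap.ker (h.baseChange S) = LinearMap.range (g.baseChange S) := by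
    ext x
    simp only [LinearMap.mem_ker, LinearMap.mem_range]
    constructor
    · intro hx
      exact (hexact x).mp hx
    · rintro ⟨y, rfl⟩
      exact (hexact _).mpr ⟨y, rfl⟩
  refine ⟨n, m,
    bm.equivFun.toLinearMap ∘ₗ (g.baseChange S) ∘ₗ bn.equivFun.symm.toLinearMap,
    (h.baseChange S) ∘ₗ bm.equivFun.symm.toLinearMap, ?_, ?_, ?_⟩
  · simp only [LinearMap.coe_comp, LinearEquiv.coe_coe]
    exact bm.equivFun.injective.comp (hbg.comp bn.equivFun.symm.injective)
  · simp only [LinearMap.coe_comp, LinearEquiv.coe_coe]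
    exact hbh.comp bm.equivFun.symm.surjective
  · ext x
    simp only [LinearMap.mem_range, LinearMap.mem_ker, LinearMap.coe_comp,
      Function.comp_apply, LinearEquiv.coe_coe]
    constructor
    · rintro ⟨v, rfl⟩
      rw [bm.equivFun.symm_apply_apply]
      have : g.baseChange S (bn.equivFun.symm v) ∈ LinearMap.ker (h.baseChange S) := by
        rw [hker]
        exact ⟨_, rfl⟩
      simpa using this
    · intro hx
      have : bm.equivFun.symm x ∈ LinearMap.range (g.baseChange S) := by
        rw [← hker]
        simpa using hx
      obtain ⟨w, hw⟩ := this
      exact ⟨bn.equivFun w, by rw [bn.equivFun.symm_apply_apply, hw,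
        bm.equivFun.apply_symm_apply]⟩
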